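/- Consider the coupled projected recursions x_{t+1} = Π_X[x_t + α(A_ff x_t + A_fs y_t − b1 + ε_t)] and y_{t+1} = Π_Y[y_t + β(A_sf x_t + A_ss y_t − b2 + ψ_t)] with constant step sizes α, β > 0, x_0 ∈ X, y_0 ∈ Y, and arbitrary noise sequences (ε_t) ⊆ ℝ^n, (ψ_t) ⊆ ℝ^m. Suppose U_Xᵀ A_ff U_X is invertible with c1 := U_X (U_Xᵀ A_ff U_X)^{-1} U_Xᵀ, and U_Yᵀ (A_ss − A_sf c1 A_fs) U_Y is invertible with c2 := U_Y (U_Yᵀ (A_ss − A_sf c1 A_fs) U_Y)^{-1} U_Yᵀ, and let (x_p*, y_p*) ∈ X × Y be the constrained solution satisfying Π_X(A_ff x_p* + A_fs y_p* − b1) = 0 and Π_Y(A_sf x_p* + A_ss y_p* − b2) = 0. Then for every T ≥ 1, with x̄_T := (1/T)Σ_{t=0}^{T−1} x_t, ȳ_T := (1/T)Σ_{t=0}^{T−1} y_t, ε̄_T := Σ_{t=0}^{T−1} ε_t, ψ̄_T := Σ_{t=0}^{T−1} ψ_t, one has the exact identity ȳ_T − y_p* = (c2/T)((y_T − y_0)/β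 − Π_Y ψ̄_T) − c2 A_sf (c1/T)((x_T − x_0)/α − Π_X ε̄_T). -/

import Mathlib

open Matrix MeasureTheory Finset
open scoped BigOperators

noncomputable section
namespace TTSA

abbrev E (n : ℕ) : Type := EuclideanSpace ℝ (Fin n)

def mv {k l : ℕ} (M : Matrix (Fin k) (Fin l) ℝ) (x : E l) : E k :=
  Matrix.toEuclideanLin M x

def specNorm {k l : ℕ} (M : Matrix (Fin k) (Fin l) ℝ) : ℝ :=
  ‖LinearMap.toContinuousLinearMap (Matrix.toEuclideanLin M)‖

def sigmaMin {k : ℕ} (M : Matrix (Fin k) (Fin k) ℝ) : ℝ :=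
  sInf ((fun v : E k => ‖mv M v‖) '' {v | ‖v‖ = 1})

def resolvent {k l : ℕ} (U : Matrix (Fin k) (Fin l) ℝ) (A : Matrix (Fin k) (Fin k) ℝ) :
    Matrix (Fin k) (Fin k) ℝ :=
  U * (Uᵀ * A * U)⁻¹ * Uᵀ

/- ### auxiliary lemmas -/

lemma mv_mul {k l p : ℕ} (M : Matrix (Fin k) (Fin l) ℝ) (N : Matrix (Fin l) (Fin p) ℝ)
    (v : E p) : mv (M * N) v = mv M (mv N v) := by
  simp [mv, Matrix.toEuclideanLin_apply, Matrix.mulVec_mulVec]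

lemma mv_matsub {k l : ℕ} (M N : Matrix (Fin k) (Fin l) ℝ) (v : E l) :
    mv (M - N) v = mv M v - mv N v := by
  simp [mv, map_sub, LinearMap.sub_apply]

lemma mv_add {k l : ℕ} (M : Matrix (Fin k) (Fin l) ℝ) (a b : E l) :
    mv M (a + b) = mv M a + mv M b := map_add _ a b

lemma mv_sub {k l : ℕ} (M : Matrix (Fin k) (Fin l) ℝ) (a b : E l) :
    mv M (a - b) = mv M a - mv M b := map_sub _ a b

lemma mv_smul {k l : ℕ} (M : Matrix (Fin k) (Fin l) ℝ) (c : ℝ) (a : E l) :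
    mv M (c • a) = c • mv M a := map_smul _ c a

lemma mv_sum {k l : ℕ} (M : Matrix (Fin k) (Fin l) ℝ) {ι : Type*} (s : Finset ι)
    (f : ι → E l) : mv M (∑ i ∈ s, f i) = ∑ i ∈ s, mv M (f i) := map_sum _ f s

lemma proj_fix {k l : ℕ} (U : Matrix (Fin k) (Fin l) ℝ) (hU : Uᵀ * U = 1) (w : E l) :
    mv (U * Uᵀ) (mv U w) = mv U w := by
  rw [← mv_mul, Matrix.mul_assoc, hU, Matrix.mul_one]

lemma resolvent_proj {k l : ℕ} (U : Matrix (Fin k) (Fin l) ℝ)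
    (A : Matrix (Fin k) (Fin k) ℝ) (hU : Uᵀ * U = 1) :
    resolvent U A * (U * Uᵀ) = resolvent U A := by
  unfold resolvent
  simp only [Matrix.mul_assoc]
  rw [show Uᵀ * (U * Uᵀ) = Uᵀ by rw [← Matrix.mul_assoc, hU, Matrix.one_mul]]

lemma resolvent_proj_apply {k l : ℕ} (U : Matrix (Fin k) (Fin l) ℝ)
    (A : Matrix (Fin k) (Fin k) ℝ) (hU : Uᵀ * U = 1) (z : E k) :
    mv (resolvent U A) (mv (U * Uᵀ) z) = mv (resolvent U A) z := by
  rw [← mv_mul, resolvent_proj U A hU]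

lemma resolvent_mul_cancel {k l : ℕ} (U : Matrix (Fin k) (Fin l) ℝ)
    (A : Matrix (Fin k) (Fin k) ℝ) (hA : IsUnit (Uᵀ * A * U)) :
    resolvent U A * A * U = U := by
  have hinv : (Uᵀ * A * U)⁻¹ * (Uᵀ * A * U) = 1 :=
    Matrix.nonsing_inv_mul _ ((Matrix.isUnit_iff_isUnit_det _).mp hA)
  simp only [Matrix.mul_assoc] at hinv ⊢
  unfold resolvent
  simp only [Matrix.mul_assoc, hinv, Matrix.mul_one]

lemma resolvent_cancel {k l : ℕ} (U : Matrix (Fin k) (Fin l) ℝ)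
    (A : Matrix (Fin k) (Fin k) ℝ) (hA : IsUnit (Uᵀ * A * U))
    (u : E k) (hu : u ∈ LinearMap.range (Matrix.toEuclideanLin U)) :
    mv (resolvent U A) (mv A u) = u := by
  obtain ⟨w, rfl⟩ := hu
  show mv (resolvent U A) (mv A (mv U w)) = mv U w
  rw [← mv_mul, ← mv_mul, resolvent_mul_cancel U A hA]

/-- exact identity for the slow Polyak–Ruppert average around the
constrained solution, with `c1 = resolvent U_X A_ff` and
`c2 = resolvent U_Y (A_ss - A_sf c1 A_fs)`. -/
theorem slow_average_exact_identity {n m d r : ℕ}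
    (Aff : Matrix (Fin n) (Fin n) ℝ) (Afs : Matrix (Fin n) (Fin m) ℝ)
    (Asf : Matrix (Fin m) (Fin n) ℝ) (Ass : Matrix (Fin m) (Fin m) ℝ)
    (b1 : E n) (b2 : E m)
    (UX : Matrix (Fin n) (Fin d) ℝ) (UY : Matrix (Fin m) (Fin r) ℝ)
    (hUX : UXᵀ * UX = 1) (hUY : UYᵀ * UY = 1)
    (α β : ℝ) (hα : 0 < α) (hβ : 0 < β)
    (x : ℕ → E n) (y : ℕ → E m) (ε : ℕ → E n) (ψ : ℕ → E m)
    (hx0 : x 0 ∈ Set.range (mv UX)) (hy0 : y 0 ∈ Set.range (mv UY))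
    (hrecx : ∀ t : ℕ, x (t + 1) =
      mv (UX * UXᵀ) (x t + α • (mv Aff (x t) + mv Afs (y t) - b1 + ε t)))
    (hrecy : ∀ t : ℕ, y (t + 1) =
      mv (UY * UYᵀ) (y t + β • (mv Asf (x t) + mv Ass (y t) - b2 + ψ t)))
    (h1 : IsUnit (UXᵀ * Aff * UX))
    (h2 : IsUnit (UYᵀ * (Ass - Asf * resolvent UX Aff * Afs) * UY))
    (xp : E n) (yp : E m)
    (hxp : xp ∈ Set.range (mv UX)) (hyp : yp ∈ Set.range (mv UY))
    (hsolx : mv (UX * UXᵀ) (mv Aff xp + mv Afs yp - b1) = 0)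
    (hsoly : mv (UY * UYᵀ) (mv Asf xp + mv Ass yp - b2) = 0) :
    ∀ T : ℕ, 1 ≤ T →
      (T : ℝ)⁻¹ • (∑ t ∈ Finset.range T, y t) - yp =
      (T : ℝ)⁻¹ • mv (resolvent UY (Ass - Asf * resolvent UX Aff * Afs))
          (β⁻¹ • (y T - y 0) - mv (UY * UYᵀ) (∑ t ∈ Finset.range T, ψ t)) -
      mv (resolvent UY (Ass - Asf * resolvent UX Aff * Afs) * Asf)
        ((T : ℝ)⁻¹ • mv (resolvent UX Aff)
          (α⁻¹ • (x T - x 0) - mv (UX * UXᵀ) (∑ t ∈ Finset.range T, ε t))) := by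
  intro T hT
  have hTne : (T : ℝ) ≠ 0 := Nat.cast_ne_zero.mpr (by omega)
  have hαne : α ≠ 0 := ne_of_gt hα
  have hβne : β ≠ 0 := ne_of_gt hβ
  set c1 : Matrix (Fin n) (Fin n) ℝ := resolvent UX Aff with hc1
  set c2 : Matrix (Fin m) (Fin m) ℝ := resolvent UY (Ass - Asf * c1 * Afs) with hc2
  -- membership of iterates
  have hxmem : ∀ t, x t ∈ LinearMap.range (Matrix.toEuclideanLin UX) := by
    intro t
    induction t with
    | zero => obtain ⟨w, hw⟩ := hx0; exact ⟨w, hw⟩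
    | succ t ih => rw [hrecx t, mv_mul]; exact ⟨_, rfl⟩
  have hymem : ∀ t, y t ∈ LinearMap.range (Matrix.toEuclideanLin UY) := by
    intro t
    induction t with
    | zero => obtain ⟨w, hw⟩ := hy0; exact ⟨w, hw⟩
    | succ t ih => rw [hrecy t, mv_mul]; exact ⟨_, rfl⟩
  have hxpm : xp ∈ LinearMap.range (Matrix.toEuclideanLin UX) := by
    obtain ⟨w, hw⟩ := hxp; exact ⟨w, hw⟩
  have hypm : yp ∈ LinearMap.range (Matrix.toEuclideanLin UY) := by
    obtain ⟨w, hw⟩ := hyp; exact ⟨w, hw⟩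
  have hPfixX : ∀ u ∈ LinearMap.range (Matrix.toEuclideanLin UX), mv (UX * UXᵀ) u = u := by
    rintro u ⟨w, rfl⟩; exact proj_fix UX hUX w
  have hPfixY : ∀ u ∈ LinearMap.range (Matrix.toEuclideanLin UY), mv (UY * UYᵀ) u = u := by
    rintro u ⟨w, rfl⟩; exact proj_fix UY hUY w
  -- step identities
  have hstepx : ∀ t, x (t + 1) - x t
      = α • mv (UX * UXᵀ) (mv Aff (x t) + mv Afs (y t) - b1 + ε t) := by
    intro t
    rw [hrecx t, mv_add, mv_smul, hPfixX _ (hxmem t)]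
    abel
  have hstepy : ∀ t, y (t + 1) - y t
      = β • mv (UY * UYᵀ) (mv Asf (x t) + mv Ass (y t) - b2 + ψ t) := by
    intro t
    rw [hrecy t, mv_add, mv_smul, hPfixY _ (hymem t)]
    abel
  set Sx : E n := ∑ t ∈ Finset.range T, x t with hSx
  set Sy : E m := ∑ t ∈ Finset.range T, y t with hSy
  set Se : E n := ∑ t ∈ Finset.range T, ε t with hSe
  set Sp : E m := ∑ t ∈ Finset.range T, ψ t with hSp
  -- summed recursions
  have hsumx : x T - x 0
      = α • mv (UX * UXᵀ) (mv Aff Sx + mv Afs Sy - (T : ℝ) • b1 + Se) := by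
    rw [← Finset.sum_range_sub x]
    simp only [hstepx]
    rw [← Finset.smul_sum, ← mv_sum]
    congr 2
    rw [hSx, hSy, hSe]
    simp only [Finset.sum_add_distrib, Finset.sum_sub_distrib, ← mv_sum,
      Finset.sum_const, Finset.card_range, Nat.cast_smul_eq_nsmul]
  have hsumy : y T - y 0
      = β • mv (UY * UYᵀ) (mv Asf Sx + mv Ass Sy - (T : ℝ) • b2 + Sp) := by
    rw [← Finset.sum_range_sub y]
    simp only [hstepy]
    rw [← Finset.smul_sum, ← mv_sum]
    congr 2
    rw [hSx, hSy, hSp]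
    simp only [Finset.sum_add_distrib, Finset.sum_sub_distrib, ← mv_sum,
      Finset.sum_const, Finset.card_range, Nat.cast_smul_eq_nsmul]
  -- averaged stationarity
  have hEx : mv (UX * UXᵀ) (mv Aff Sx + mv Afs Sy - (T : ℝ) • b1)
      = α⁻¹ • (x T - x 0) - mv (UX * UXᵀ) Se := by
    rw [hsumx, smul_smul, inv_mul_cancel₀ hαne, one_smul, mv_add]
    abel
  have hEy : mv (UY * UYᵀ) (mv Asf Sx + mv Ass Sy - (T : ℝ) • b2)
      = β⁻¹ • (y T - y 0) - mv (UY * UYᵀ) Sp := by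
    rw [hsumy, smul_smul, inv_mul_cancel₀ hβne, one_smul, mv_add]
    abel
  set u : E n := Sx - (T : ℝ) • xp with hu
  set v : E m := Sy - (T : ℝ) • yp with hv
  have hum : u ∈ LinearMap.range (Matrix.toEuclideanLin UX) :=
    sub_mem (Submodule.sum_mem _ fun t _ => hxmem t) (Submodule.smul_mem _ _ hxpm)
  have hvm : v ∈ LinearMap.range (Matrix.toEuclideanLin UY) :=
    sub_mem (Submodule.sum_mem _ fun t _ => hymem t) (Submodule.smul_mem _ _ hypm)
  -- centered equations
  have hx' : mv (UX * UXᵀ) (mv Aff u + mv Afs v)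
      = α⁻¹ • (x T - x 0) - mv (UX * UXᵀ) Se := by
    have h0 : mv (UX * UXᵀ) ((T : ℝ) • (mv Aff xp + mv Afs yp - b1)) = 0 := by
      rw [mv_smul, hsolx, smul_zero]
    calc mv (UX * UXᵀ) (mv Aff u + mv Afs v)
        = mv (UX * UXᵀ) (mv Aff Sx + mv Afs Sy - (T : ℝ) • b1)
            - mv (UX * UXᵀ) ((T : ℝ) • (mv Aff xp + mv Afs yp - b1)) := by
          rw [hu, hv]
          simp only [mv_sub, mv_add, mv_smul, smul_sub, smul_add]
          abel
      _ = _ := by rw [h0, sub_zero, hEx]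
  have hy' : mv (UY * UYᵀ) (mv Asf u + mv Ass v)
      = β⁻¹ • (y T - y 0) - mv (UY * UYᵀ) Sp := by
    have h0 : mv (UY * UYᵀ) ((T : ℝ) • (mv Asf xp + mv Ass yp - b2)) = 0 := by
      rw [mv_smul, hsoly, smul_zero]
    calc mv (UY * UYᵀ) (mv Asf u + mv Ass v)
        = mv (UY * UYᵀ) (mv Asf Sx + mv Ass Sy - (T : ℝ) • b2)
            - mv (UY * UYᵀ) ((T : ℝ) • (mv Asf xp + mv Ass yp - b2)) := by
          rw [hu, hv]
          simp only [mv_sub, mv_add, mv_smul, smul_sub, smul_add]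
          abel
      _ = _ := by rw [h0, sub_zero, hEy]
  set Rx : E n := α⁻¹ • (x T - x 0) - mv (UX * UXᵀ) Se with hRx
  set Ry : E m := β⁻¹ • (y T - y 0) - mv (UY * UYᵀ) Sp with hRy
  have hproj1 : ∀ z : E n, mv c1 (mv (UX * UXᵀ) z) = mv c1 z :=
    fun z => resolvent_proj_apply UX Aff hUX z
  have hproj2 : ∀ z : E m, mv c2 (mv (UY * UYᵀ) z) = mv c2 z :=
    fun z => resolvent_proj_apply UY _ hUY z
  have hcan1 : mv c1 (mv Aff u) = u := resolvent_cancel UX Aff h1 u hum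
  have hcan2 : mv c2 (mv (Ass - Asf * c1 * Afs) v) = v :=
    resolvent_cancel UY _ h2 v hvm
  -- solve for u
  have huEq : u = mv c1 Rx - mv (c1 * Afs) v := by
    rw [← hx', hproj1, mv_add, hcan1, mv_mul]
    abel
  -- key identity for v
  have hKey : mv c2 Ry = mv (c2 * Asf * c1) Rx + v := by
    rw [← hy', hproj2, mv_add, huEq]
    calc mv c2 (mv Asf (mv c1 Rx - mv (c1 * Afs) v)) + mv c2 (mv Ass v)
        = mv (c2 * Asf * c1) Rx + mv c2 (mv (Ass - Asf * c1 * Afs) v) := by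
          simp only [mv_sub, mv_add, mv_matsub, mv_mul]
          abel
      _ = mv (c2 * Asf * c1) Rx + v := by rw [hcan2]
  -- conclude
  rw [hKey, mv_smul, ← mv_mul, hv]
  simp only [smul_add, smul_sub, smul_smul, inv_mul_cancel₀ hTne, one_smul]
  abel

end TTSA
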